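/- For every nonnegative integer n and every complex number z, ∑_{k=0}^{⌊n/4⌋} (-1)^k · C(n,4k) · B_{n-4k}(z)/2^{6k} = (1/2^{n+1})·∑_{k=0}^{n} (-1)^k · ((1 + i^k)/(1 + i)^k) · C(n,k) · B_{n-k}(2z), where i is the imaginary unit and C(n,k) denotes the binomial coefficient. -/

import Mathlib

open Finset

/-- The Bernoulli polynomial `B_n` evaluated at a complex number `z`,
with generating function `t·e^{zt}/(e^t−1) = ∑_{n≥0} B_n(z)·t^n/n!`. -/
noncomputable def bernoulliPoly (n : ℕ) (z : ℂ) : ℂ :=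
  Polynomial.aeval z (Polynomial.bernoulli n)

/-- The Euler polynomial `E_n` evaluated at a complex number `z`,
with generating function `2·e^{zt}/(e^t+1) = ∑_{n≥0} E_n(z)·t^n/n!`,
given by the explicit formula `E_n(z) = ∑_{k=0}^n 2^{-k} ∑_{j=0}^k (-1)^j C(k,j)(z+j)^n`. -/
noncomputable def eulerPoly (n : ℕ) (z : ℂ) : ℂ :=
  ∑ k ∈ range (n + 1), (1 / 2 ^ k : ℂ) *
    ∑ j ∈ range (k + 1), (-1) ^ j * (k.choose j : ℂ) * (z + j) ^ n

open PowerSeries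
private noncomputable def bSer (w : ℂ) : PowerSeries ℂ :=
  PowerSeries.mk fun m => Polynomial.aeval w ((1 / m.factorial : ℚ) • Polynomial.bernoulli m)

private lemma bSer_gf (w : ℂ) :
    bSer w * (PowerSeries.exp ℂ - 1)
      = PowerSeries.X * PowerSeries.rescale w (PowerSeries.exp ℂ) :=
  Polynomial.bernoulli_generating_function w

private lemma coeff_bSer (w : ℂ) (q : ℕ) :
    PowerSeries.coeff (R := ℂ) q (bSer w) = ((q.factorial : ℕ) : ℂ)⁻¹ * bernoulliPoly q w := by
  rw [bSer, PowerSeries.coeff_mk, map_smul, Rat.smul_def]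
  push_cast
  rw [one_div, bernoulliPoly]

private lemma halg (p : ℕ) : (algebraMap ℚ ℂ) (1 / p.factorial) = ((p.factorial : ℕ) : ℂ)⁻¹ := by
  rw [eq_ratCast]
  push_cast
  rw [one_div]

private lemma I_filter (p : ℕ) :
    (∑ j ∈ range 4, (Complex.I ^ p) ^ j) = if 4 ∣ p then (4 : ℂ) else 0 := by
  have h4 : Complex.I ^ 4 = 1 := by
    rw [show (4:ℕ) = 2*2 from rfl, pow_mul, Complex.I_sq]; norm_num
  have hmod : Complex.I ^ p = Complex.I ^ (p % 4) := by
    conv_lhs => rw [← Nat.div_add_mod p 4]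
    rw [pow_add, pow_mul, h4, one_pow, one_mul]
  rw [hmod]
  have h : p % 4 = 0 ∨ p % 4 = 1 ∨ p % 4 = 2 ∨ p % 4 = 3 := by omega
  rcases h with h | h | h | h <;> rw [h]
  · rw [if_pos (by omega)]
    norm_num [Finset.sum_range_succ]
  · rw [if_neg (by omega)]
    simp only [Finset.sum_range_succ, Finset.sum_range_one, pow_one]
    linear_combination (1 + Complex.I) * Complex.I_sq
  · rw [if_neg (by omega)]
    simp only [Finset.sum_range_succ, Finset.sum_range_one]
    linear_combination (1 + Complex.I^4) * Complex.I_sq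
  · rw [if_neg (by omega)]
    simp only [Finset.sum_range_succ, Finset.sum_range_one]
    linear_combination (Complex.I^4 - Complex.I^2 + 1)*(Complex.I^3+1) * Complex.I_sq

private lemma key_series (z : ℂ) :
    (PowerSeries.C (R := ℂ) 4⁻¹ * ∑ j ∈ range 4,
        rescale (Complex.I ^ j * ((1+Complex.I)/4)) (PowerSeries.exp ℂ)) * bSer z
      = (PowerSeries.C (R := ℂ) 2⁻¹ * (rescale (-(1-Complex.I)/4) (PowerSeries.exp ℂ)
            + rescale (-(1+Complex.I)/4) (PowerSeries.exp ℂ)))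
          * rescale (2⁻¹ : ℂ) (bSer (2*z)) := by
  have hD1 : rescale (2⁻¹:ℂ) (PowerSeries.exp ℂ) - 1 ≠ 0 := by
    intro h
    have h1 := congrArg (PowerSeries.coeff (R := ℂ) 1) h
    simp [PowerSeries.coeff_rescale, PowerSeries.coeff_exp, halg] at h1
  have hD2 : rescale (2⁻¹:ℂ) (PowerSeries.exp ℂ) + 1 ≠ 0 := by
    intro h
    have h1 := congrArg (PowerSeries.coeff (R := ℂ) 0) h
    rw [map_add, PowerSeries.coeff_rescale] at h1
    simp [PowerSeries.coeff_exp, halg] at h1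
  apply mul_right_cancel₀ (mul_ne_zero hD1 hD2)
  have hfac : (rescale (2⁻¹:ℂ) (PowerSeries.exp ℂ) - 1) * (rescale (2⁻¹:ℂ) (PowerSeries.exp ℂ) + 1)
      = PowerSeries.exp ℂ - 1 := by
    have h2 := PowerSeries.exp_mul_exp_eq_exp_add (2⁻¹:ℂ) 2⁻¹
    rw [show (2⁻¹ + 2⁻¹ : ℂ) = 1 by norm_num] at h2
    calc (rescale (2⁻¹:ℂ) (PowerSeries.exp ℂ) - 1) * (rescale (2⁻¹:ℂ) (PowerSeries.exp ℂ) + 1)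
        = rescale (2⁻¹:ℂ) (PowerSeries.exp ℂ) * rescale (2⁻¹:ℂ) (PowerSeries.exp ℂ) - 1 := by ring
      _ = PowerSeries.exp ℂ - 1 := by rw [h2, PowerSeries.rescale_one, RingHom.id_apply]
  have hres : rescale (2⁻¹:ℂ) (bSer (2*z)) * (rescale (2⁻¹:ℂ) (PowerSeries.exp ℂ) - 1)
      = PowerSeries.C (R := ℂ) 2⁻¹ * (PowerSeries.X * rescale z (PowerSeries.exp ℂ)) := by
    rw [show rescale (2⁻¹:ℂ) (PowerSeries.exp ℂ) - 1 = rescale (2⁻¹:ℂ) (PowerSeries.exp ℂ - 1) by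
        rw [map_sub, map_one],
      ← map_mul, bSer_gf, map_mul, PowerSeries.rescale_X, PowerSeries.rescale_rescale,
      show (2*z*2⁻¹ : ℂ) = z by ring, mul_assoc]
  have hF : (PowerSeries.C (R := ℂ) 4⁻¹ * ∑ j ∈ range 4,
        rescale (Complex.I ^ j * ((1+Complex.I)/4)) (PowerSeries.exp ℂ))
      = PowerSeries.C (R := ℂ) 2⁻¹ * (PowerSeries.C (R := ℂ) 2⁻¹ * (rescale (-(1-Complex.I)/4) (PowerSeries.exp ℂ)
          + rescale (-(1+Complex.I)/4) (PowerSeries.exp ℂ)) * (rescale (2⁻¹:ℂ) (PowerSeries.exp ℂ) + 1)) := by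
    have e1 : Complex.I ^ 0 * ((1+Complex.I)/4) = -(1-Complex.I)/4 + 2⁻¹ := by
      norm_num; ring
    have e2 : Complex.I ^ 1 * ((1+Complex.I)/4) = -(1-Complex.I)/4 := by
      linear_combination Complex.I_sq / 4
    have e3 : Complex.I ^ 2 * ((1+Complex.I)/4) = -(1+Complex.I)/4 := by
      linear_combination ((1+Complex.I)/4) * Complex.I_sq
    have e4 : Complex.I ^ 3 * ((1+Complex.I)/4) = -(1+Complex.I)/4 + 2⁻¹ := by
      linear_combination ((Complex.I^2+Complex.I-1)/4) * Complex.I_sq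
    have hCC : PowerSeries.C (R := ℂ) 2⁻¹ * PowerSeries.C (R := ℂ) 2⁻¹ = PowerSeries.C (R := ℂ) 4⁻¹ := by
      rw [← map_mul]; norm_num
    rw [Finset.sum_range_succ, Finset.sum_range_succ, Finset.sum_range_succ, Finset.sum_range_one,
      e1, e2, e3, e4, ← PowerSeries.exp_mul_exp_eq_exp_add, ← PowerSeries.exp_mul_exp_eq_exp_add]
    linear_combination (-((rescale (-(1-Complex.I)/4) (PowerSeries.exp ℂ)
      + rescale (-(1+Complex.I)/4) (PowerSeries.exp ℂ))
      * (rescale (2⁻¹:ℂ) (PowerSeries.exp ℂ) + 1))) * hCC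
  calc (PowerSeries.C (R := ℂ) 4⁻¹ * ∑ j ∈ range 4,
        rescale (Complex.I ^ j * ((1+Complex.I)/4)) (PowerSeries.exp ℂ)) * bSer z
        * ((rescale (2⁻¹:ℂ) (PowerSeries.exp ℂ) - 1) * (rescale (2⁻¹:ℂ) (PowerSeries.exp ℂ) + 1))
      = (PowerSeries.C (R := ℂ) 4⁻¹ * ∑ j ∈ range 4,
          rescale (Complex.I ^ j * ((1+Complex.I)/4)) (PowerSeries.exp ℂ))
          * (bSer z * (PowerSeries.exp ℂ - 1)) := by rw [hfac]; ring
    _ = (PowerSeries.C (R := ℂ) 4⁻¹ * ∑ j ∈ range 4,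
          rescale (Complex.I ^ j * ((1+Complex.I)/4)) (PowerSeries.exp ℂ))
          * (PowerSeries.X * rescale z (PowerSeries.exp ℂ)) := by rw [bSer_gf]
    _ = (PowerSeries.C (R := ℂ) 2⁻¹ * (PowerSeries.C (R := ℂ) 2⁻¹ * (rescale (-(1-Complex.I)/4) (PowerSeries.exp ℂ)
          + rescale (-(1+Complex.I)/4) (PowerSeries.exp ℂ)) * (rescale (2⁻¹:ℂ) (PowerSeries.exp ℂ) + 1)))
          * (PowerSeries.X * rescale z (PowerSeries.exp ℂ)) := by rw [hF]
    _ = (PowerSeries.C (R := ℂ) 2⁻¹ * (rescale (-(1-Complex.I)/4) (PowerSeries.exp ℂ)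
          + rescale (-(1+Complex.I)/4) (PowerSeries.exp ℂ)))
          * (PowerSeries.C (R := ℂ) 2⁻¹ * (PowerSeries.X * rescale z (PowerSeries.exp ℂ)))
          * (rescale (2⁻¹:ℂ) (PowerSeries.exp ℂ) + 1) := by ring
    _ = (PowerSeries.C (R := ℂ) 2⁻¹ * (rescale (-(1-Complex.I)/4) (PowerSeries.exp ℂ)
          + rescale (-(1+Complex.I)/4) (PowerSeries.exp ℂ)))
          * (rescale (2⁻¹:ℂ) (bSer (2*z)) * (rescale (2⁻¹:ℂ) (PowerSeries.exp ℂ) - 1))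
          * (rescale (2⁻¹:ℂ) (PowerSeries.exp ℂ) + 1) := by rw [hres]
    _ = (PowerSeries.C (R := ℂ) 2⁻¹ * (rescale (-(1-Complex.I)/4) (PowerSeries.exp ℂ)
          + rescale (-(1+Complex.I)/4) (PowerSeries.exp ℂ))) * rescale (2⁻¹:ℂ) (bSer (2*z))
          * ((rescale (2⁻¹:ℂ) (PowerSeries.exp ℂ) - 1) * (rescale (2⁻¹:ℂ) (PowerSeries.exp ℂ) + 1)) := by
        ring

private lemma coeff_filter_side (z : ℂ) (n : ℕ) :
    PowerSeries.coeff (R := ℂ) n ((PowerSeries.C (R := ℂ) 4⁻¹ * ∑ j ∈ range 4,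
        rescale (Complex.I ^ j * ((1+Complex.I)/4)) (PowerSeries.exp ℂ)) * bSer z)
      = (∑ k ∈ range (n / 4 + 1), (-1 : ℂ) ^ k * (n.choose (4 * k) : ℂ) *
          bernoulliPoly (n - 4 * k) z / 2 ^ (6 * k)) * ((n.factorial : ℕ) : ℂ)⁻¹ := by
  have coeffS : ∀ p : ℕ, PowerSeries.coeff (R := ℂ) p (∑ j ∈ range 4,
      rescale (Complex.I ^ j * ((1+Complex.I)/4)) (PowerSeries.exp ℂ))
      = (if 4 ∣ p then (4:ℂ) else 0) * (((1+Complex.I)/4) ^ p * ((p.factorial : ℕ) : ℂ)⁻¹) := by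
    intro p
    rw [map_sum]
    have h : ∀ j, PowerSeries.coeff (R := ℂ) p (rescale (Complex.I ^ j * ((1+Complex.I)/4)) (PowerSeries.exp ℂ))
        = (Complex.I^p)^j * (((1+Complex.I)/4)^p * ((p.factorial : ℕ) : ℂ)⁻¹) := by
      intro j
      rw [PowerSeries.coeff_rescale, PowerSeries.coeff_exp, halg, mul_pow, ← pow_mul,
        mul_comm j p, pow_mul, mul_assoc]
    simp only [h]
    rw [← Finset.sum_mul, I_filter]
  rw [mul_assoc, PowerSeries.coeff_C_mul, PowerSeries.coeff_mul,
    Nat.sum_antidiagonal_eq_sum_range_succ_mk]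
  simp only [coeffS, coeff_bSer, ite_mul, zero_mul]
  rw [← Finset.sum_filter]
  have hset : (range (n+1)).filter (fun p => 4 ∣ p) = (range (n/4+1)).image (fun k => 4*k) := by
    ext p
    simp only [Finset.mem_filter, Finset.mem_image, Finset.mem_range]
    constructor
    · intro ⟨h1, h2⟩
      exact ⟨p/4, by omega, by omega⟩
    · rintro ⟨k, hk, rfl⟩
      constructor
      · omega
      · exact ⟨k, rfl⟩
  rw [hset, Finset.sum_image (by intro x _ y _ h; simp only at h; omega)]
  rw [Finset.mul_sum, Finset.sum_mul]
  refine Finset.sum_congr rfl fun k hk => ?_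
  have h4k : 4*k ≤ n := by have := Finset.mem_range.mp hk; omega
  have hch : ((n.choose (4*k)) : ℂ) = (n.factorial : ℂ) /
      ((((4*k).factorial : ℕ) : ℂ) * (((n - 4*k).factorial : ℕ) : ℂ)) := by
    exact_mod_cast Nat.cast_choose ℂ h4k
  have hc4 : (((1+Complex.I)/4 : ℂ))^(4*k) = (-1)^k / 2^(6*k) := by
    rw [pow_mul, show (((1+Complex.I)/4 : ℂ))^4 = -(1/64) by
      linear_combination ((Complex.I^2+4*Complex.I+5)/256) * Complex.I_sq]
    rw [show (-(1/64) : ℂ) = (-1)/64 by norm_num, div_pow,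
      show ((64:ℂ))^k = 2^(6*k) by rw [pow_mul]; norm_num]
  have f1 : (((4*k).factorial : ℕ) : ℂ) ≠ 0 := Nat.cast_ne_zero.2 (Nat.factorial_ne_zero _)
  have f2 : (((n-4*k).factorial : ℕ) : ℂ) ≠ 0 := Nat.cast_ne_zero.2 (Nat.factorial_ne_zero _)
  have f3 : ((n.factorial : ℕ) : ℂ) ≠ 0 := Nat.cast_ne_zero.2 (Nat.factorial_ne_zero _)
  have f4 : ((2:ℂ))^(6*k) ≠ 0 := pow_ne_zero _ two_ne_zero
  rw [hch, hc4]
  field_simp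

set_option maxHeartbeats 1000000 in
private lemma coeff_euler_side (z : ℂ) (n : ℕ) :
    PowerSeries.coeff (R := ℂ) n ((PowerSeries.C (R := ℂ) 2⁻¹ * (rescale (-(1-Complex.I)/4) (PowerSeries.exp ℂ)
        + rescale (-(1+Complex.I)/4) (PowerSeries.exp ℂ))) * rescale (2⁻¹:ℂ) (bSer (2*z)))
      = ((1 / 2 ^ (n + 1) : ℂ) * ∑ k ∈ range (n + 1), (-1 : ℂ) ^ k *
          ((1 + Complex.I ^ k) / (1 + Complex.I) ^ k) * (n.choose k : ℂ) *
          bernoulliPoly (n - k) (2 * z)) * ((n.factorial : ℕ) : ℂ)⁻¹ := by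
  rw [mul_assoc, PowerSeries.coeff_C_mul, PowerSeries.coeff_mul,
    Nat.sum_antidiagonal_eq_sum_range_succ_mk, Finset.mul_sum, Finset.mul_sum, Finset.sum_mul]
  refine Finset.sum_congr rfl fun k hk => ?_
  dsimp only
  have hk' : k ≤ n := by have := Finset.mem_range.mp hk; omega
  rw [map_add, PowerSeries.coeff_rescale, PowerSeries.coeff_rescale, PowerSeries.coeff_exp, halg,
    PowerSeries.coeff_rescale, coeff_bSer]
  have h1I : (1 + Complex.I) ≠ 0 := by
    intro h
    have := congrArg Complex.re h
    simp at this
  have h2I : (2*(1+Complex.I) : ℂ) ≠ 0 := mul_ne_zero two_ne_zero h1I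
  have hu3 : (-(1-Complex.I)/4 : ℂ) = -1 / (2*(1+Complex.I)) := by
    rw [div_eq_div_iff (by norm_num) h2I]
    linear_combination 2*Complex.I_sq
  have hv3 : (-(1+Complex.I)/4 : ℂ) = (-1*Complex.I) / (2*(1+Complex.I)) := by
    rw [div_eq_div_iff (by norm_num) h2I]
    linear_combination (-2)*Complex.I_sq
  have hch : ((n.choose k) : ℂ) = (n.factorial : ℂ) /
      (((k.factorial : ℕ) : ℂ) * (((n - k).factorial : ℕ) : ℂ)) := by
    exact_mod_cast Nat.cast_choose ℂ hk'
  have f1 : ((k.factorial : ℕ) : ℂ) ≠ 0 := Nat.cast_ne_zero.2 (Nat.factorial_ne_zero _)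
  have f2 : (((n-k).factorial : ℕ) : ℂ) ≠ 0 := Nat.cast_ne_zero.2 (Nat.factorial_ne_zero _)
  have f3 : ((n.factorial : ℕ) : ℂ) ≠ 0 := Nat.cast_ne_zero.2 (Nat.factorial_ne_zero _)
  have f4 : ((1+Complex.I):ℂ)^k ≠ 0 := pow_ne_zero _ h1I
  have f5 : ((2:ℂ))^k ≠ 0 := pow_ne_zero _ two_ne_zero
  have f7 : ((2:ℂ))^(n-k) ≠ 0 := pow_ne_zero _ two_ne_zero
  have f8 : ((2:ℂ))^(n+1) ≠ 0 := pow_ne_zero _ two_ne_zero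
  have hsplit : ((2:ℂ))^(n+1) = 2^(n-k) * 2^k * 2 := by
    rw [← pow_add, ← pow_succ]
    congr 1
    omega
  have huv : (-(1-Complex.I)/4 : ℂ)^k + (-(1+Complex.I)/4 : ℂ)^k
      = (-1:ℂ)^k * ((1 + Complex.I ^ k) / (1 + Complex.I) ^ k) * (((2:ℂ))^k)⁻¹ := by
    rw [hu3, hv3, div_pow, div_pow, ← add_div, mul_pow (2:ℂ), mul_pow (-1:ℂ)]
    field_simp
  have h2 : ((2:ℂ)⁻¹)^(n-k) = 2 * 2^k * (((2:ℂ))^(n+1))⁻¹ := by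
    rw [inv_pow, hsplit]
    field_simp
  -- goal currently has the two pow terms separately; combine them first
  rw [show (-(1-Complex.I)/4 : ℂ)^k * ((k.factorial : ℕ):ℂ)⁻¹ + (-(1+Complex.I)/4 : ℂ)^k * ((k.factorial : ℕ):ℂ)⁻¹
      = ((-(1-Complex.I)/4 : ℂ)^k + (-(1+Complex.I)/4 : ℂ)^k) * ((k.factorial : ℕ):ℂ)⁻¹ from (add_mul _ _ _).symm]
  rw [huv, hch, h2]
  have e2 : ((n.factorial : ℕ):ℂ) * ((n.factorial : ℕ):ℂ)⁻¹ = 1 := mul_inv_cancel₀ f3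
  have e5 : ((2:ℂ))^k * (((2:ℂ))^k)⁻¹ = 1 := mul_inv_cancel₀ f5
  linear_combination (((-1:ℂ)^k * ((1 + Complex.I ^ k) / (1 + Complex.I) ^ k) *
      ((k.factorial : ℕ):ℂ)⁻¹ * (((n-k).factorial : ℕ):ℂ)⁻¹ * bernoulliPoly (n - k) (2*z)) *
      (((2:ℂ))^(n+1))⁻¹) * e5
    - (((-1:ℂ)^k * ((1 + Complex.I ^ k) / (1 + Complex.I) ^ k) *
      ((k.factorial : ℕ):ℂ)⁻¹ * (((n-k).factorial : ℕ):ℂ)⁻¹ * bernoulliPoly (n - k) (2*z)) *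
      (((2:ℂ))^(n+1))⁻¹) * e2

theorem stmt5 (n : ℕ) (z : ℂ) :
    ∑ k ∈ range (n / 4 + 1), (-1 : ℂ) ^ k * (n.choose (4 * k) : ℂ) *
        bernoulliPoly (n - 4 * k) z / 2 ^ (6 * k)
      = (1 / 2 ^ (n + 1) : ℂ) * ∑ k ∈ range (n + 1), (-1 : ℂ) ^ k *
        ((1 + Complex.I ^ k) / (1 + Complex.I) ^ k) * (n.choose k : ℂ) *
        bernoulliPoly (n - k) (2 * z) := by
  have h := congrArg (PowerSeries.coeff (R := ℂ) n) (key_series z)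
  rw [coeff_filter_side, coeff_euler_side] at h
  exact mul_right_cancel₀ (inv_ne_zero (Nat.cast_ne_zero.2 (Nat.factorial_ne_zero n))) h
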